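/- Let H be a complex Hilbert space, 0 < q < 1, and let X be a bounded linear operator on H satisfying X*X = q² X X* + (1 − q²)·I. If ker X* = {0}, then X is a unitary operator, i.e. X*X = I and X X* = I. -/

import Mathlib

open ContinuousLinearMap Pointwise

set_option maxHeartbeats 1000000 in
/-- If a bounded operator `X` on a complex Hilbert space satisfies
`X*X = q² X X* + (1 - q²) I` with `0 < q < 1`, and `ker X* = {0}`, then `X` is unitary:
`X*X = I` and `X X* = I`. -/
theorem unitary_of_qrelation_of_ker_adjoint_eq_bot
    {H : Type*} [NormedAddCommGroup H] [InnerProductSpace ℂ H] [CompleteSpace H]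
    (q : ℝ) (hq0 : 0 < q) (hq1 : q < 1) (X : H →L[ℂ] H)
    (hrel : adjoint X * X = ((q : ℂ) ^ 2) • (X * adjoint X) + (1 - (q : ℂ) ^ 2) • 1)
    (hker : LinearMap.ker (adjoint X : H →ₗ[ℂ] H) = ⊥) :
    adjoint X * X = 1 ∧ X * adjoint X = 1 := by
  rcases subsingleton_or_nontrivial H with hH | hH
  · exact ⟨Subsingleton.elim _ _, Subsingleton.elim _ _⟩
  have hq2R : (0:ℝ) < 1 - q^2 := by nlinarith
  have hq2 : (1 - (q : ℂ) ^ 2) ≠ 0 := by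
    intro h
    have : (1 - q^2 : ℝ) = 0 := by exact_mod_cast congrArg Complex.re h
    linarith
  have hadj_inj : ∀ v : H, adjoint X v = 0 → v = 0 := by
    intro v hv
    exact (LinearMap.ker_eq_bot.mp hker) (by simpa using hv)
  -- pointwise norm identity
  have key : ∀ v : H, ‖X v‖^2 = q^2 * ‖adjoint X v‖^2 + (1 - q^2) * ‖v‖^2 := by
    intro v
    have h1 : (inner ℂ v ((adjoint X * X) v) : ℂ) = inner ℂ (X v) (X v) := by
      simp only [ContinuousLinearMap.mul_apply]
      exact ContinuousLinearMap.adjoint_inner_right X v (X v)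
    have h2 : (inner ℂ v ((adjoint X * X) v) : ℂ)
        = (q:ℂ)^2 * inner ℂ (adjoint X v) (adjoint X v) + (1 - (q:ℂ)^2) * inner ℂ v v := by
      rw [hrel]
      simp only [ContinuousLinearMap.add_apply, ContinuousLinearMap.smul_apply,
        ContinuousLinearMap.one_apply, ContinuousLinearMap.mul_apply, inner_add_right,
        inner_smul_right]
      congr 1
      rw [ContinuousLinearMap.adjoint_inner_left]
    have h3 : (inner ℂ (X v) (X v) : ℂ)
        = (q:ℂ)^2 * inner ℂ (adjoint X v) (adjoint X v) + (1 - (q:ℂ)^2) * inner ℂ v v := by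
      rw [← h1, h2]
    have e1 : (inner ℂ (X v) (X v) : ℂ) = ((‖X v‖^2 : ℝ) : ℂ) := by
      rw [inner_self_eq_norm_sq_to_K]; norm_cast
    have e2 : (inner ℂ (adjoint X v) (adjoint X v) : ℂ) = ((‖adjoint X v‖^2 : ℝ) : ℂ) := by
      rw [inner_self_eq_norm_sq_to_K]; norm_cast
    have e3 : (inner ℂ v v : ℂ) = ((‖v‖^2 : ℝ) : ℂ) := by
      rw [inner_self_eq_norm_sq_to_K]; norm_cast
    rw [e1, e2, e3] at h3
    exact_mod_cast h3
  -- X is injective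
  have hkerX : LinearMap.ker (X : H →ₗ[ℂ] H) = ⊥ := by
    rw [Submodule.eq_bot_iff]
    intro v hv
    have hv' : X v = 0 := hv
    have := key v
    rw [hv'] at this
    simp only [norm_zero] at this
    have h1 : ‖v‖^2 ≤ 0 := by nlinarith [sq_nonneg ‖adjoint X v‖]
    have : ‖v‖ = 0 := by nlinarith [norm_nonneg v]
    exact norm_eq_zero.mp this
  -- X has closed range
  have hanti : AntilipschitzWith ((Real.sqrt (1 - q^2))⁻¹).toNNReal X := by
    apply X.antilipschitz_of_bound
    intro x
    have hx : Real.sqrt (1 - q^2) * ‖x‖ ≤ ‖X x‖ := by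
      have h1 : Real.sqrt ((1-q^2) * ‖x‖^2) ≤ Real.sqrt (‖X x‖^2) := by
        apply Real.sqrt_le_sqrt
        nlinarith [sq_nonneg ‖adjoint X x‖, key x]
      rwa [Real.sqrt_mul hq2R.le, Real.sqrt_sq (norm_nonneg x),
        Real.sqrt_sq (norm_nonneg (X x))] at h1
    have hs : 0 < Real.sqrt (1 - q^2) := Real.sqrt_pos.mpr hq2R
    rw [Real.coe_toNNReal _ (by positivity)]
    rw [inv_mul_eq_div, le_div_iff₀ hs]
    linarith [hx]
  have hclosed : IsClosed ((LinearMap.range (X : H →ₗ[ℂ] H) : Submodule ℂ H) : Set H) := by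
    rw [LinearMap.coe_range]
    exact hanti.isClosed_range X.uniformContinuous
  haveI : CompleteSpace (LinearMap.range (X : H →ₗ[ℂ] H) : Submodule ℂ H) := hclosed.completeSpace_coe
  -- range X = ⊤
  have hsurj : LinearMap.range (X : H →ₗ[ℂ] H) = ⊤ := by
    rw [← Submodule.orthogonal_eq_bot_iff]
    rw [Submodule.eq_bot_iff]
    intro v hv
    have h0 : (inner ℂ (X (adjoint X v)) v : ℂ) = 0 :=
      (Submodule.mem_orthogonal _ v).mp hv _ ⟨adjoint X v, rfl⟩
    have h1 : (inner ℂ (adjoint X v) (adjoint X v) : ℂ) = 0 := by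
      rw [← ContinuousLinearMap.adjoint_inner_right X] at h0
      exact h0
    exact hadj_inj v (inner_self_eq_zero.mp h1)
  -- X is a unit
  have hXunit : IsUnit X := by
    let e := ContinuousLinearEquiv.ofBijective X hkerX hsurj
    refine ⟨⟨X, (e.symm : H →L[ℂ] H), ?_, ?_⟩, rfl⟩
    · ext v
      simp only [ContinuousLinearMap.mul_apply, ContinuousLinearMap.coe_coe,
        ContinuousLinearMap.one_apply]
      exact e.apply_symm_apply v
    · ext v
      simp only [ContinuousLinearMap.mul_apply, ContinuousLinearMap.coe_coe,
        ContinuousLinearMap.one_apply]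
      exact e.symm_apply_apply v
  have hUadj : IsUnit (adjoint X) := by
    rw [← ContinuousLinearMap.star_eq_adjoint]
    exact hXunit.star
  -- the selfadjoint operator A = 1 - X X*
  set A : H →L[ℂ] H := 1 - X * adjoint X with hA
  have hAsa : IsSelfAdjoint A := by
    rw [IsSelfAdjoint, hA, star_sub, star_one, star_mul,
      ContinuousLinearMap.star_eq_adjoint, ContinuousLinearMap.star_eq_adjoint,
      ContinuousLinearMap.adjoint_adjoint]
  -- the commutation relation X* A = q² A X*
  have hcomm : adjoint X * A = ((q:ℂ)^2) • (A * adjoint X) := by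
    have expand : adjoint X * A = adjoint X - (adjoint X * X) * adjoint X := by
      rw [hA]; noncomm_ring
    rw [expand, hrel, hA]
    simp only [add_mul, smul_mul_assoc, one_mul, sub_mul, smul_sub, mul_assoc]
    module
  -- A is similar to q² A
  set u := hUadj.unit with hu
  have huc : (u : H →L[ℂ] H) = adjoint X := hUadj.unit_spec
  have hsim : A = ((q:ℂ)^2) • ((↑u⁻¹ : H →L[ℂ] H) * A * (↑u : H →L[ℂ] H)) := by
    have h1 : A = (↑u⁻¹ : H →L[ℂ] H) * ((↑u : H →L[ℂ] H) * A) := by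
      rw [← mul_assoc, u.inv_mul, one_mul]
    conv_lhs => rw [h1]
    rw [huc, hcomm, mul_smul_comm, mul_assoc]
  -- spectrum of A is scaled by q²
  have hq2c : ((q:ℂ)^2) ≠ 0 := by
    intro h
    have : (q:ℝ)^2 = 0 := by exact_mod_cast congrArg Complex.re h
    nlinarith
  have hspec : spectrum ℂ A = (Units.mk0 ((q:ℂ)^2) hq2c) • spectrum ℂ A := by
    conv_lhs => rw [hsim]
    rw [show (((q:ℂ)^2) • ((↑u⁻¹ : H →L[ℂ] H) * A * ↑u))
        = ((Units.mk0 ((q:ℂ)^2) hq2c : ℂˣ) • ((↑u⁻¹ : H →L[ℂ] H) * A * ↑u)) from rfl]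
    rw [spectrum.unit_smul_eq_smul, spectrum.units_conjugate']
  -- spectral radius of A is 0
  haveI : Nontrivial (H →L[ℂ] H) := by
    obtain ⟨v, hv⟩ := exists_ne (0 : H)
    refine ⟨1, 0, fun h => hv ?_⟩
    have := congrArg (fun T : H →L[ℂ] H => T v) h
    simpa using this
  have hrad : spectralRadius ℂ A = 0 := by
    obtain ⟨x, hx, hxr⟩ :=
      spectrum.exists_nnnorm_eq_spectralRadius_of_nonempty (spectrum.nonempty A)
    rw [hspec] at hx
    obtain ⟨y, hy, hxy⟩ := hx
    have hyle : (‖y‖₊ : ENNReal) ≤ spectralRadius ℂ A :=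
      le_iSup₂ (f := fun k (_ : k ∈ spectrum ℂ A) => (‖k‖₊ : ENNReal)) y hy
    rw [← hxr] at hyle
    have hxy' : ‖x‖₊ = ‖(q:ℂ)^2‖₊ * ‖y‖₊ := by
      rw [← hxy]
      simp [nnnorm_smul]
    have hyx : ‖y‖₊ ≤ ‖x‖₊ := by exact_mod_cast hyle
    have hqn : ‖(q:ℂ)^2‖₊ < 1 := by
      rw [← NNReal.coe_lt_coe]
      simp only [coe_nnnorm, NNReal.coe_one]
      have : ‖((q:ℂ)^2)‖ = q^2 := by
        rw [show ((q:ℂ)^2) = ((q^2 : ℝ) : ℂ) by push_cast; ring, Complex.norm_real, Real.norm_eq_abs]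
        exact abs_of_pos (by positivity)
      rw [this]; nlinarith
    have hy0 : ‖y‖₊ = 0 := by
      by_contra h
      have hy0' : 0 < ‖y‖₊ := pos_iff_ne_zero.mpr h
      have : ‖x‖₊ < ‖y‖₊ := by
        rw [hxy']
        calc ‖(q:ℂ)^2‖₊ * ‖y‖₊ < 1 * ‖y‖₊ := by exact mul_lt_mul_of_pos_right hqn hy0'
          _ = ‖y‖₊ := one_mul _
      exact absurd hyx (not_le.mpr this)
    have hx0 : ‖x‖₊ = 0 := by rw [hxy', hy0, mul_zero]
    rw [← hxr, hx0, ENNReal.coe_zero]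
  -- A = 0
  have hA0 : A = 0 := by
    have := hAsa.spectralRadius_eq_nnnorm
    rw [hrad] at this
    have : ‖A‖₊ = 0 := by exact_mod_cast this.symm
    simpa using (nnnorm_eq_zero.mp this)
  have hXXadj : X * adjoint X = 1 := by
    have h := hA0
    rw [hA] at h
    exact (sub_eq_zero.mp h).symm
  refine ⟨?_, hXXadj⟩
  rw [hrel, hXXadj, ← add_smul, show ((q:ℂ)^2 + (1 - (q:ℂ)^2)) = 1 by ring, one_smul]
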